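/- arXiv:1909.00980 — 3 statements merged into one kernel-verified Lean document; each statement's English description precedes it below -/
import Mathlib

section
/- Let α ∈ (0,1) be irrational with continued fraction expansion [0; a_1, a_2, ...] and best approximation denominators (q_n). Then every natural number N ≥ 1 has a unique expansion N = ∑_{j=1}^z b_j q_j where 0 ≤ b_1 ≤ a_1 − 1, 0 ≤ b_j ≤ a_j for j > 1, and whenever b_j = a_j for some j > 1 one has b_{j-1} = 0. -/
open Real Filter

namespace OstrowskiAux

/-- Partial sum of digits against denominators. -/
def S (Q : ℕ → ℕ) (b : ℕ → ℕ) (z : ℕ) : ℕ := ∑ j ∈ Finset.Icc 1 z, b j * Q j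

/-- Digit constraints. -/
def Digits (a b : ℕ → ℕ) : Prop :=
  b 1 < a 1 ∧ (∀ j, 2 ≤ j → b j ≤ a j) ∧ (∀ j, 2 ≤ j → b j = a j → b (j - 1) = 0)

/-- Hypotheses on the denominator sequence. -/
structure Hyp (a Q : ℕ → ℕ) : Prop where
  ha : ∀ i, 1 ≤ a i
  hQ0 : Q 0 = 0
  hQ1 : Q 1 = 1
  hrec : ∀ n, 1 ≤ n → Q (n + 1) = a n * Q n + Q (n - 1)

variable {a Q : ℕ → ℕ}

theorem S_succ (b : ℕ → ℕ) (z : ℕ) :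
    S Q b (z + 1) = S Q b z + b (z + 1) * Q (z + 1) :=
  Finset.sum_Icc_succ_top (by omega) _

theorem S_stable (b : ℕ → ℕ) {z w : ℕ} (hzw : z ≤ w)
    (hsupp : ∀ j, b j ≠ 0 → j ≤ z) : S Q b w = S Q b z := by
  refine (Finset.sum_subset (Finset.Icc_subset_Icc_right hzw) ?_).symm
  intro j hj hj'
  simp only [Finset.mem_Icc] at hj hj'
  have : b j = 0 := by
    by_contra hb
    exact hj' ⟨hj.1, hsupp j hb⟩
  simp [this]

theorem Qpos (h : Hyp a Q) : ∀ n, 1 ≤ n → 1 ≤ Q n := by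
  intro n hn
  induction n, hn using Nat.le_induction with
  | base => exact h.hQ1.ge
  | succ n hn ih =>
    have hr := h.hrec n hn
    have : 1 * 1 ≤ a n * Q n := Nat.mul_le_mul (h.ha n) ih
    linarith [h.hQ1]

theorem Qmono (h : Hyp a Q) : ∀ n, Q n ≤ Q (n + 1) := by
  intro n
  rcases Nat.eq_zero_or_pos n with rfl | hn
  · rw [h.hQ0]; omega
  · have hr := h.hrec n hn
    have : 1 * Q n ≤ a n * Q n := Nat.mul_le_mul_right _ (h.ha n)
    linarith

theorem Qgrow (h : Hyp a Q) : ∀ n, n ≤ Q (n + 1) := by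
  intro n
  induction n using Nat.strong_induction_on with
  | _ n ih =>
    match n with
    | 0 => omega
    | 1 => exact Qpos h 2 (by omega)
    | (k + 2) =>
      show k + 2 ≤ Q (k + 3)
      have h1 : k + 1 ≤ Q (k + 2) := ih (k + 1) (by omega)
      have h2 : 1 ≤ Q (k + 1) := Qpos h (k + 1) (by omega)
      have h3 : Q (k + 3) = a (k + 2) * Q (k + 2) + Q (k + 1) :=
        h.hrec (k + 2) (by omega)
      have h4 : 1 * Q (k + 2) ≤ a (k + 2) * Q (k + 2) :=
        Nat.mul_le_mul_right _ (h.ha (k + 2))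
      linarith

theorem bound (h : Hyp a Q) (b : ℕ → ℕ) (hb : Digits a b) :
    ∀ z, S Q b z < Q (z + 1) := by
  intro z
  induction z using Nat.strong_induction_on with
  | _ z ih =>
    match z with
    | 0 =>
      show S Q b 0 < Q 1
      have : S Q b 0 = 0 := by simp [S]
      have h2 := h.hQ1
      omega
    | 1 =>
      show S Q b 1 < Q 2
      have h2 : Q 2 = a 1 * Q 1 + Q 0 := h.hrec 1 (by omega)
      have : S Q b 1 = b 1 * Q 1 := by simp [S]
      rw [this, h.hQ1, h2, h.hQ0, h.hQ1]
      have := hb.1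
      omega
    | (k + 2) =>
      show S Q b (k + 2) < Q (k + 3)
      have hrec : Q (k + 3) = a (k + 2) * Q (k + 2) + Q (k + 1) :=
        h.hrec (k + 2) (by omega)
      have hS : S Q b (k + 2) = S Q b (k + 1) + b (k + 2) * Q (k + 2) := S_succ b (k + 1)
      rcases eq_or_lt_of_le (hb.2.1 (k + 2) (by omega)) with he | hlt
      · have h0 : b (k + 1) = 0 := hb.2.2 (k + 2) (by omega) he
        have hS1 : S Q b (k + 1) = S Q b k + b (k + 1) * Q (k + 1) := S_succ b k
        have hik := ih k (by omega)
        rw [h0] at hS1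
        rw [he] at hS
        linarith
      · have hik := ih (k + 1) (by omega)
        have hm : (b (k + 2) + 1) * Q (k + 2) ≤ a (k + 2) * Q (k + 2) :=
          Nat.mul_le_mul_right _ hlt
        rw [add_mul, one_mul] at hm
        have hq : 0 ≤ Q (k + 1) := Nat.zero_le _
        linarith

theorem unique (h : Hyp a Q) : ∀ z (b c : ℕ → ℕ), Digits a b → Digits a c →
    S Q b z = S Q c z → ∀ j, 1 ≤ j → j ≤ z → b j = c j := by
  intro z
  induction z with
  | zero => intro b c _ _ _ j h1 h2; omega
  | succ z ih =>
    intro b c hb hc hS j hj1 hj2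
    have hbb := bound h b hb z
    have hcb := bound h c hc z
    have eb : S Q b (z + 1) = S Q b z + b (z + 1) * Q (z + 1) := S_succ b z
    have ec : S Q c (z + 1) = S Q c z + c (z + 1) * Q (z + 1) := S_succ c z
    have key : b (z + 1) = c (z + 1) := by
      rcases lt_trichotomy (b (z + 1)) (c (z + 1)) with hlt | he | hgt
      · exfalso
        have hm : (b (z + 1) + 1) * Q (z + 1) ≤ c (z + 1) * Q (z + 1) :=
          Nat.mul_le_mul_right _ hlt
        rw [add_mul, one_mul] at hm
        linarith
      · exact he
      · exfalso
        have hm : (c (z + 1) + 1) * Q (z + 1) ≤ b (z + 1) * Q (z + 1) :=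
          Nat.mul_le_mul_right _ hgt
        rw [add_mul, one_mul] at hm
        linarith
    rcases Nat.eq_or_lt_of_le hj2 with hje | hjlt
    · rw [hje]; exact key
    · have hS' : S Q b z = S Q c z := by
        rw [eb, ec, key] at hS
        omega
      exact ih b c hb hc hS' j hj1 (by omega)

theorem exist (h : Hyp a Q) : ∀ N : ℕ, ∃ b : ℕ → ℕ,
    Digits a b ∧ b 0 = 0 ∧ (∀ j, b j ≠ 0 → 1 ≤ j ∧ Q j ≤ N) ∧ S Q b (N + 1) = N := by
  intro N
  induction N using Nat.strong_induction_on with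
  | _ N ih =>
    rcases Nat.eq_zero_or_pos N with rfl | hN
    · refine ⟨fun _ => 0, ⟨by show 0 < a 1; exact h.ha 1, by simp, by simp⟩, rfl, by simp, by simp [S]⟩
    · -- the largest index z with Q z ≤ N
      have hsupb : ∀ k, 1 ≤ k → Q k ≤ N → k ≤ N + 1 := by
        intro k hk hkN
        have := Qgrow h (k - 1)
        rw [Nat.sub_add_cancel hk] at this
        omega
      set F := (Finset.Icc 1 (N + 1)).filter (fun k => Q k ≤ N) with hF
      have h1F : 1 ∈ F := by
        simp only [hF, Finset.mem_filter, Finset.mem_Icc]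
        refine ⟨⟨le_rfl, by omega⟩, ?_⟩
        rw [h.hQ1]
        exact hN
      have hFne : F.Nonempty := ⟨1, h1F⟩
      set z := F.max' hFne with hz
      have hzF : z ∈ F := F.max'_mem hFne
      simp only [hF, Finset.mem_filter, Finset.mem_Icc] at hzF
      obtain ⟨⟨hz1, hzN1⟩, hzQ⟩ := hzF
      have hzmax : ∀ k, Q k ≤ N → k ≤ z := by
        intro k hk
        rcases Nat.eq_zero_or_pos k with rfl | hk1
        · omega
        · exact F.le_max' k (by
            simp only [hF, Finset.mem_filter, Finset.mem_Icc]
            exact ⟨⟨hk1, hsupb k hk1 hk⟩, hk⟩)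
      have hNlt : N < Q (z + 1) := by
        by_contra h'
        have := hzmax (z + 1) (by omega)
        omega
      have hQz : 1 ≤ Q z := Qpos h z hz1
      have hrecz : Q (z + 1) = a z * Q z + Q (z - 1) := h.hrec z hz1
      set d := N / Q z with hd
      set r := N % Q z with hr
      have hdr : Q z * d + r = N := Nat.div_add_mod N (Q z)
      have hrQ : r < Q z := Nat.mod_lt _ hQz
      have hd1 : 1 ≤ d := (Nat.one_le_div_iff hQz).mpr hzQ
      have hdQ : Q z * 1 ≤ Q z * d := Nat.mul_le_mul_left _ hd1
      have hrN : r < N := by omega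
      have hQm : Q (z - 1) ≤ Q z := by
        have := Qmono h (z - 1)
        rwa [Nat.sub_add_cancel hz1] at this
      have hda : d ≤ a z := by
        have h5 : Q z * a z = a z * Q z := Nat.mul_comm _ _
        have h6 : N < (a z + 1) * Q z := by
          rw [add_mul, one_mul, ← h5]
          have : 0 ≤ Q (z - 1) := Nat.zero_le _
          omega
        have := (Nat.div_lt_iff_lt_mul hQz).mpr h6
        omega
      obtain ⟨c, hcD, hc0, hcsupp, hcS⟩ := ih r hrN
      have hcz : c z = 0 := by
        by_contra hb
        have := (hcsupp z hb).2
        omega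
      set b : ℕ → ℕ := fun j => if j = z then d else c j with hbdef
      have hbz : b z = d := by simp [hbdef]
      have hbne : ∀ j, j ≠ z → b j = c j := by
        intro j hj
        simp [hbdef, hj]
      refine ⟨b, ⟨?_, ?_, ?_⟩, ?_, ?_, ?_⟩
      · -- b 1 < a 1
        rcases eq_or_ne z 1 with hz1' | hz1'
        · rw [hz1'] at hbz hNlt hrecz hdr hrQ
          norm_num [h.hQ0, h.hQ1] at hrecz hdr hrQ hNlt
          rw [hbz]
          omega
        · rw [hbne 1 (fun h' => hz1' h'.symm)]
          exact hcD.1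
      · intro j hj
        rcases eq_or_ne j z with hjz | hjz
        · rw [hjz, hbz]; exact hda
        · rw [hbne j hjz]; exact hcD.2.1 j hj
      · intro j hj hja
        rcases eq_or_ne j z with hjz | hjz
        · subst hjz
          rw [hbz] at hja
          rw [hbne (z - 1) (by omega)]
          have hcm : Q z * d = Q z * a z := by rw [hja]
          have hcomm : Q z * a z = a z * Q z := Nat.mul_comm _ _
          have hrlt : r < Q (z - 1) := by omega
          by_contra hb
          have := (hcsupp (z - 1) hb).2
          omega
        · rw [hbne j hjz] at hja
          have hjle : j < z := by
            have hcj : c j ≠ 0 := by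
              have := h.ha j
              omega
            have h2 := (hcsupp j hcj).2
            have := hzmax j (by omega)
            omega
          rw [hbne (j - 1) (by omega)]
          exact hcD.2.2 j hj hja
      · rw [hbne 0 (by omega)]
        exact hc0
      · intro j hbj
        rcases eq_or_ne j z with hjz | hjz
        · rw [hjz]; exact ⟨hz1, hzQ⟩
        · rw [hbne j hjz] at hbj
          obtain ⟨h1, h2⟩ := hcsupp j hbj
          exact ⟨h1, by omega⟩
      · -- the sum
        have hzmem : z ∈ Finset.Icc 1 (N + 1) := Finset.mem_Icc.mpr ⟨hz1, hzN1⟩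
        have hcsub : ∀ j, c j ≠ 0 → j ≤ r + 1 := by
          intro j hj
          obtain ⟨h1, h2⟩ := hcsupp j hj
          have := Qgrow h (j - 1)
          rw [Nat.sub_add_cancel h1] at this
          omega
        have hcstable : S Q c (N + 1) = r := by
          rw [S_stable c (by omega) hcsub]
          exact hcS
        have e1 : S Q b (N + 1)
            = (∑ j ∈ Finset.Icc 1 (N + 1) \ {z}, b j * Q j) + d * Q z := by
          simp only [S]
          rw [Finset.sum_eq_sum_sdiff_singleton_add hzmem, hbz]
        have e2 : S Q c (N + 1)
            = (∑ j ∈ Finset.Icc 1 (N + 1) \ {z}, c j * Q j) + c z * Q z := by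
          simp only [S]
          rw [Finset.sum_eq_sum_sdiff_singleton_add hzmem]
        have e3 : (∑ j ∈ Finset.Icc 1 (N + 1) \ {z}, b j * Q j)
            = ∑ j ∈ Finset.Icc 1 (N + 1) \ {z}, c j * Q j := by
          refine Finset.sum_congr rfl ?_
          intro j hj
          rw [Finset.mem_sdiff, Finset.mem_singleton] at hj
          rw [hbne j hj.2]
        have hQcomm : Q z * d = d * Q z := Nat.mul_comm _ _
        rw [e1, e3]
        rw [e2, hcz] at hcstable
        omega

end OstrowskiAux

/-- Ostrowski representation: every `N ≥ 1` has a unique expansion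
`N = ∑_{j=1}^z b j * q j` with `b 1 ≤ a 1 - 1`, `b j ≤ a j` for `j > 1`, and
`b j = a j → b (j-1) = 0`.  The digits are encoded as a finitely supported
function `b : ℕ →₀ ℕ` supported in indices `≥ 1`. -/
theorem stmt_7 (α : ℝ) (hirr : Irrational α) (h0 : 0 < α) (h1 : α < 1)
    (a : ℕ → ℕ) (ha : ∀ i, 1 ≤ a i)
    (q p : ℕ → ℤ)
    (hq0 : q 0 = 0) (hq1 : q 1 = 1)
    (hqrec : ∀ n, 1 ≤ n → q (n + 1) = a n * q n + q (n - 1))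
    (hp0 : p 0 = 1) (hp1 : p 1 = 0)
    (hprec : ∀ n, 1 ≤ n → p (n + 1) = a n * p n + p (n - 1))
    (hlim : Filter.Tendsto (fun n => (p n : ℝ) / q n) Filter.atTop (nhds α))
    (N : ℕ) (hN : 1 ≤ N) :
    ∃! b : ℕ →₀ ℕ,
      b 0 = 0 ∧
      b 1 ≤ a 1 - 1 ∧
      (∀ j, 2 ≤ j → b j ≤ a j) ∧
      (∀ j, 2 ≤ j → b j = a j → b (j - 1) = 0) ∧
      (N : ℤ) = ∑ j ∈ b.support, (b j : ℤ) * q j := by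
  classical
  set Q : ℕ → ℕ := fun n => (q n).toNat with hQdef
  have hnn : ∀ n, 0 ≤ q n ∧ 0 ≤ q (n + 1) := by
    intro n
    induction n with
    | zero => constructor <;> simp [hq0, hq1]
    | succ n ihn =>
      refine ⟨ihn.2, ?_⟩
      have hr := hqrec (n + 1) (by omega)
      have h4 : q (n + 1 - 1) = q n := rfl
      rw [hr, h4]
      have hx1 : (0 : ℤ) ≤ (a (n + 1) : ℤ) := Int.natCast_nonneg _
      exact add_nonneg (mul_nonneg hx1 ihn.2) ihn.1
  have hcast : ∀ n, ((Q n : ℤ)) = q n := fun n => Int.toNat_of_nonneg (hnn n).1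
  have hQ0 : Q 0 = 0 := by simp [hQdef, hq0]
  have hQ1 : Q 1 = 1 := by simp [hQdef, hq1]
  have hQrec : ∀ n, 1 ≤ n → Q (n + 1) = a n * Q n + Q (n - 1) := by
    intro n hn
    have hc : ((Q (n + 1) : ℤ)) = ((a n * Q n + Q (n - 1) : ℕ) : ℤ) := by
      push_cast [hcast]
      exact hqrec n hn
    exact_mod_cast hc
  have hyp : OstrowskiAux.Hyp a Q := ⟨ha, hQ0, hQ1, hQrec⟩
  -- generic sum manipulation lemmas
  have hsum : ∀ (B : ℕ →₀ ℕ) (s : Finset ℕ), B.support ⊆ s →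
      ∑ j ∈ B.support, (B j : ℤ) * q j = ∑ j ∈ s, (B j : ℤ) * q j := by
    intro B s hs
    refine Finset.sum_subset hs ?_
    intro j _ hj
    rw [Finsupp.notMem_support_iff.mp hj]
    simp
  have hcastS : ∀ (f : ℕ → ℕ) (w : ℕ),
      ∑ j ∈ Finset.Icc 1 w, (f j : ℤ) * q j = ((OstrowskiAux.S Q f w : ℕ) : ℤ) := by
    intro f w
    simp only [OstrowskiAux.S]
    rw [Nat.cast_sum]
    refine Finset.sum_congr rfl ?_
    intro j _
    rw [← hcast j]
    push_cast
    ring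
  -- the representation
  obtain ⟨bf, hbD, hb0, hbsupp, hbS⟩ := OstrowskiAux.exist hyp N
  have hmem : ∀ j, bf j ≠ 0 → j ∈ Finset.Icc 1 (N + 1) := by
    intro j hj
    obtain ⟨hj1, hj2⟩ := hbsupp j hj
    have := OstrowskiAux.Qgrow hyp (j - 1)
    rw [Nat.sub_add_cancel hj1] at this
    exact Finset.mem_Icc.mpr ⟨hj1, by omega⟩
  set B : ℕ →₀ ℕ := Finsupp.onFinset (Finset.Icc 1 (N + 1)) bf hmem with hBdef
  have hBapp : ∀ j, B j = bf j := fun j => rfl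
  refine ⟨B, ⟨?_, ?_, ?_, ?_, ?_⟩, ?_⟩
  · rw [hBapp 0]; exact hb0
  · rw [hBapp 1]
    have h1 := hbD.1
    have h2 := ha 1
    omega
  · intro j hj
    rw [hBapp j]
    exact hbD.2.1 j hj
  · intro j hj hja
    rw [hBapp (j - 1)]
    refine hbD.2.2 j hj ?_
    rw [← hBapp j]
    exact hja
  · have hsupset : B.support ⊆ Finset.Icc 1 (N + 1) := Finsupp.support_onFinset_subset
    rw [hsum B _ hsupset]
    have he : ∀ j ∈ Finset.Icc 1 (N + 1), (B j : ℤ) * q j = (bf j : ℤ) * q j := by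
      intro j _
      rw [hBapp j]
    rw [Finset.sum_congr rfl he, hcastS bf (N + 1), hbS]
  · -- uniqueness
    intro B' hB'
    obtain ⟨hB'0, hB'1, hB'le, hB'dig, hB'sum⟩ := hB'
    set z := N + 1 + B'.support.sup id with hzdef
    have hsupp' : B'.support ⊆ Finset.Icc 1 z := by
      intro j hj
      have hj0 : B' j ≠ 0 := Finsupp.mem_support_iff.mp hj
      have hle : j ≤ B'.support.sup id := Finset.le_sup (f := id) hj
      have hj1 : 1 ≤ j := by
        rcases Nat.eq_zero_or_pos j with rfl | hp
        · exact absurd hB'0 hj0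
        · exact hp
      exact Finset.mem_Icc.mpr ⟨hj1, by omega⟩
    have hS' : OstrowskiAux.S Q (⇑B') z = N := by
      have h1 : (N : ℤ) = ∑ j ∈ Finset.Icc 1 z, (B' j : ℤ) * q j := by
        rw [← hsum B' _ hsupp']
        exact hB'sum
      rw [hcastS (⇑B') z] at h1
      exact_mod_cast h1.symm
    have hSb : OstrowskiAux.S Q bf z = N := by
      have hst : OstrowskiAux.S Q bf z = OstrowskiAux.S Q bf (N + 1) :=
        OstrowskiAux.S_stable bf (by omega)
          (fun j hj => by
            have := hmem j hj
            rw [Finset.mem_Icc] at this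
            omega)
      rw [hst, hbS]
    have hdig' : OstrowskiAux.Digits a (⇑B') := by
      refine ⟨?_, hB'le, hB'dig⟩
      have := ha 1
      omega
    have hkey := OstrowskiAux.unique hyp z (⇑B') bf hdig' hbD (by rw [hS', hSb])
    ext j
    rcases Nat.eq_zero_or_pos j with rfl | hj1
    · rw [hB'0, hBapp 0, hb0]
    · by_cases hjz : j ≤ z
      · rw [hBapp j]
        exact hkey j hj1 hjz
      · have h1 : B' j = 0 := by
          by_contra hb
          have := hsupp' (Finsupp.mem_support_iff.mpr hb)
          rw [Finset.mem_Icc] at this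
          omega
        have h2 : bf j = 0 := by
          by_contra hb
          have := hmem j hb
          rw [Finset.mem_Icc] at this
          omega
        rw [h1, hBapp j, h2]
end

section
/- Let α = [0; a_1, a_2, ...] be irrational with coefficients bounded by M = max_j a_j, and suppose Lubinsky's bound holds: for every n with Ostrowski expansion n = ∑_{j=1}^z b_j q_j, log P_n(α) ≤ 800 z# + 151 ∑_j (b_j/a_j) max_{k<j} log a_k + (3/2)∑_j log⁺ b_j + ∑_j b_j log(2π b_j q_j |q_j α − p_j|/e), where z# is the number of nonzero b_j. If M is sufficiently large and a_j ≥ K(M) infinitely often where K satisfies 802 + 151(log M)/K − log K < 0, then liminf_{n→∞} P_n(α) = 0. -/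
open Real Finset Filter

/-- Theorem 5 of the paper, conditional on Lubinsky's bound:
if `α` has continued fraction coefficients bounded by `M`, Lubinsky's upper
bound for `log P_n(α)` holds, and `a j ≥ K` infinitely often for some `K`
with `802 + 151 log M / K - log K < 0`, then `liminf P_n(α) = 0`. -/
theorem stmt_16 (α : ℝ) (hirr : Irrational α) (h0 : 0 < α) (h1 : α < 1)
    (a : ℕ → ℕ) (ha : ∀ i, 1 ≤ a i)
    (M : ℕ) (hM : ∀ j, a j ≤ M) (hMmax : ∃ j, a j = M)
    (q p : ℕ → ℤ)
    (hq0 : q 0 = 0) (hq1 : q 1 = 1)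
    (hqrec : ∀ n, 1 ≤ n → q (n + 1) = a n * q n + q (n - 1))
    (hp0 : p 0 = 1) (hp1 : p 1 = 0)
    (hprec : ∀ n, 1 ≤ n → p (n + 1) = a n * p n + p (n - 1))
    (hlim : Filter.Tendsto (fun n => (p n : ℝ) / q n) Filter.atTop (nhds α))
    (hLubinsky : ∀ (n z : ℕ) (b : ℕ → ℕ), 1 ≤ n → 1 ≤ z →
      b 1 ≤ a 1 - 1 →
      (∀ j, 2 ≤ j → b j ≤ a j) →
      (∀ j, 2 ≤ j → b j = a j → b (j - 1) = 0) →
      (n : ℤ) = ∑ j ∈ Finset.Icc 1 z, (b j : ℤ) * q j →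
      Real.log (∏ r ∈ Finset.Icc 1 n, |2 * Real.sin (Real.pi * r * α)|) ≤
        800 * ((Finset.Icc 1 z).filter (fun j => b j ≠ 0)).card
        + 151 * ∑ j ∈ Finset.Icc 1 z,
            ((b j : ℝ) / a j) * Real.log (((Finset.Ico 1 j).sup a : ℕ))
        + (3 / 2) * ∑ j ∈ Finset.Icc 1 z, max (Real.log (b j)) 0
        + ∑ j ∈ Finset.Icc 1 z,
            (b j : ℝ) * Real.log (2 * Real.pi * b j * q j * |(q j : ℝ) * α - p j| / Real.exp 1))
    (K : ℕ) (hK1 : 1 ≤ K) (hKM : K ≤ M)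
    (hKineq : 802 + 151 * Real.log M / K - Real.log K < 0)
    (hio : ∀ j : ℕ, ∃ j' : ℕ, j < j' ∧ K ≤ a j') :
    Filter.atTop.liminf
      (fun n : ℕ => ∏ r ∈ Finset.Icc 1 n, |2 * Real.sin (Real.pi * r * α)|) = 0 := by
  -- small helpers about logs of naturals
  have lognn : ∀ n : ℕ, 0 ≤ Real.log n := by
    intro n
    rcases Nat.eq_zero_or_pos n with h | h
    · simp [h]
    · exact Real.log_nonneg (by exact_mod_cast h)
  have lognat_mono : ∀ x y : ℕ, x ≤ y → Real.log x ≤ Real.log y := by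
    intro x y hxy
    rcases Nat.eq_zero_or_pos x with h | h
    · simpa [h] using lognn y
    · exact Real.log_le_log (by exact_mod_cast h) (by exact_mod_cast hxy)
  -- basic facts about q
  have hqkey : ∀ j : ℕ, 0 ≤ q j ∧ (1 ≤ j → 1 ≤ q j) := by
    intro j
    induction j using Nat.strong_induction_on with
    | _ j ih =>
      match j with
      | 0 => simp [hq0]
      | 1 => simp [hq1]
      | (n+2) =>
        have h1 : q (n+2) = (a (n+1) : ℤ) * q (n+1) + q n := by
          have := hqrec (n+1) (by omega); simpa using this
        have h2 := (ih (n+1) (by omega)).2 (by omega)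
        have h3 := (ih n (by omega)).1
        have h4 : (1:ℤ) ≤ (a (n+1) : ℤ) := by exact_mod_cast ha (n+1)
        constructor
        · nlinarith
        · intro _; nlinarith
  have hq_nonneg : ∀ j, (0:ℤ) ≤ q j := fun j => (hqkey j).1
  have hq_pos : ∀ j, 1 ≤ j → (1:ℤ) ≤ q j := fun j h => (hqkey j).2 h
  have hq_mono : ∀ j, 1 ≤ j → q j ≤ q (j+1) := by
    intro j hj
    have h1 := hqrec j hj
    have h4 : (1:ℤ) ≤ (a j:ℤ) := by exact_mod_cast ha j
    nlinarith [hq_pos j hj, hq_nonneg (j-1)]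
  have hq_lb : ∀ j, 1 ≤ j → (a j : ℤ) * q j ≤ q (j+1) := by
    intro j hj
    have h1 := hqrec j hj
    have h2 := hq_nonneg (j-1)
    linarith
  have hQ1 : ∀ j, 1 ≤ j → (1:ℝ) ≤ (q j:ℝ) := fun j hj => by exact_mod_cast hq_pos j hj
  have hQ0 : ∀ j, (0:ℝ) ≤ (q j:ℝ) := fun j => by exact_mod_cast hq_nonneg j
  have hQpos : ∀ j, 1 ≤ j → (0:ℝ) < (q j:ℝ) := fun j hj => lt_of_lt_of_le one_pos (hQ1 j hj)
  have hQne : ∀ j, 1 ≤ j → ((q j:ℝ)) ≠ 0 := fun j hj => ne_of_gt (hQpos j hj)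
  -- determinant identity
  have hdet : ∀ j, 1 ≤ j → p (j+1) * q j - p j * q (j+1) = (-1)^(j+1) := by
    intro j hj
    induction j, hj using Nat.le_induction with
    | base =>
      have hp2 : p 2 = 1 := by
        have := hprec 1 le_rfl
        rw [hp0, hp1] at this
        simpa using this
      norm_num [hp2, hp1, hq1]
    | succ j hj ih =>
      have hp := hprec (j+1) (by omega)
      have hq := hqrec (j+1) (by omega)
      simp only [Nat.add_sub_cancel] at hp hq
      rw [hp, hq]
      have : (a (j+1) : ℤ) * p (j+1) * q (j+1) - p (j+1) * ((a (j+1):ℤ) * q (j+1)) = 0 := by ring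
      calc ((a (j+1):ℤ) * p (j+1) + p j) * q (j+1) - p (j+1) * ((a (j+1):ℤ) * q (j+1) + q j)
          = -(p (j+1) * q j - p j * q (j+1)) := by ring
        _ = (-1)^(j+1+1) := by rw [ih]; ring
  set x : ℕ → ℝ := fun i => (p i : ℝ) / (q i : ℝ) with hx
  have hd : ∀ i, 1 ≤ i → x (i+1) - x i = (-1:ℝ)^(i+1) / ((q i:ℝ) * (q (i+1):ℝ)) := by
    intro i hi
    have h1 := hQne i hi
    have h2 := hQne (i+1) (by omega)
    have h3 : ((p (i+1) * q i - p i * q (i+1) : ℤ) : ℝ) = (-1:ℝ)^(i+1) := by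
      rw [hdet i hi]; push_cast; ring
    simp only [hx]
    push_cast at h3
    rw [div_sub_div _ _ h2 h1,
      show (p (i+1):ℝ) * (q i:ℝ) - (q (i+1):ℝ) * (p i:ℝ)
        = (p (i+1):ℝ) * (q i:ℝ) - (p i:ℝ) * (q (i+1):ℝ) by ring, h3,
      mul_comm ((q (i+1):ℝ)) ((q i:ℝ))]
  -- alternating sign of convergent differences
  have hsign : ∀ j, 1 ≤ j → ∀ k, 0 ≤ (-1:ℝ)^(j+1) * (x (j+2*k) - x j) := by
    intro j hj k
    induction k with
    | zero => simp
    | succ k ih =>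
      have hi : 1 ≤ j + 2*k := by omega
      have e1 := hd (j+2*k) hi
      have e2 := hd (j+2*k+1) (by omega)
      have hs1 : (-1:ℝ)^(j+2*k+1) = (-1:ℝ)^(j+1) := by
        rw [show j+2*k+1 = (j+1) + 2*k by omega, pow_add, pow_mul, neg_one_sq, one_pow, mul_one]
      have hs2 : (-1:ℝ)^(j+2*k+1+1) = -(-1:ℝ)^(j+1) := by
        rw [pow_succ, hs1]; ring
      have hx2 : x (j+2*(k+1)) = x (j+2*k+1+1) := by
        norm_num [show j+2*(k+1) = j+2*k+1+1 by omega]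
      have hm1 : (q (j+2*k):ℝ) ≤ q (j+2*k+1) := by exact_mod_cast hq_mono _ hi
      have hm2 : (q (j+2*k+1):ℝ) ≤ q (j+2*k+1+1) := by exact_mod_cast hq_mono _ (by omega)
      have hp1 : (0:ℝ) < (q (j+2*k):ℝ) := hQpos _ hi
      have hp2 : (0:ℝ) < (q (j+2*k+1):ℝ) := hQpos _ (by omega)
      have hp3 : (0:ℝ) < (q (j+2*k+1+1):ℝ) := hQpos _ (by omega)
      have hfrac : (1:ℝ)/((q (j+2*k+1):ℝ) * (q (j+2*k+1+1):ℝ)) ≤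
          1/((q (j+2*k):ℝ) * (q (j+2*k+1):ℝ)) := by
        apply one_div_le_one_div_of_le (by positivity)
        nlinarith
      have hss : (-1:ℝ)^(j+1) * (-1:ℝ)^(j+1) = 1 := by
        rw [← pow_add, show (j+1)+(j+1) = 2*(j+1) by omega, pow_mul, neg_one_sq, one_pow]
      have key : (-1:ℝ)^(j+1) * (x (j+2*(k+1)) - x (j+2*k)) =
          1/((q (j+2*k):ℝ) * (q (j+2*k+1):ℝ)) - 1/((q (j+2*k+1):ℝ)*(q (j+2*k+1+1):ℝ)) := by
        rw [hx2]
        have hsplit : x (j+2*k+1+1) - x (j+2*k)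
            = (x (j+2*k+1+1) - x (j+2*k+1)) + (x (j+2*k+1) - x (j+2*k)) := by ring
        rw [hsplit, e2, e1, hs2, hs1]
        linear_combination (1/((q (j+2*k):ℝ) * (q (j+2*k+1):ℝ))
          - 1/((q (j+2*k+1):ℝ)*(q (j+2*k+1+1):ℝ))) * hss
      have hstep : 0 ≤ (-1:ℝ)^(j+1) * (x (j+2*(k+1)) - x (j+2*k)) := by
        rw [key]; linarith
      have hfin : (-1:ℝ)^(j+1) * (x (j+2*(k+1)) - x j)
          = (-1:ℝ)^(j+1) * (x (j+2*(k+1)) - x (j+2*k)) + (-1:ℝ)^(j+1) * (x (j+2*k) - x j) := by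
        ring
      rw [hfin]
      linarith
  -- α is on the right side of each convergent
  have hαsign : ∀ j, 1 ≤ j → 0 ≤ (-1:ℝ)^(j+1) * (α - x j) := by
    intro j hj
    have h2 : Tendsto (fun k : ℕ => j + 2*k) atTop atTop := by
      apply tendsto_atTop_atTop.mpr
      intro N
      exact ⟨N, fun k hk => by omega⟩
    have hsub : Tendsto (fun k : ℕ => x (j + 2*k)) atTop (nhds α) := hlim.comp h2
    have T : Tendsto (fun k : ℕ => (-1:ℝ)^(j+1) * (x (j+2*k) - x j)) atTop
        (nhds ((-1:ℝ)^(j+1) * (α - x j))) :=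
      (hsub.sub tendsto_const_nhds).const_mul _
    exact ge_of_tendsto' T (hsign j hj)
  -- the error bound
  have herrb : ∀ j, 1 ≤ j → |α - x j| ≤ 1/((q j:ℝ) * (q (j+1):ℝ)) := by
    intro j hj
    have h1 := hαsign j hj
    have h2 := hαsign (j+1) (by omega)
    have hs : (-1:ℝ)^(j+1+1) = -(-1:ℝ)^(j+1) := by rw [pow_succ]; ring
    rw [hs] at h2
    have hdj := hd j hj
    have habs : |(-1:ℝ)^(j+1)| = 1 := by rw [abs_pow, abs_neg, abs_one, one_pow]
    have hss : (-1:ℝ)^(j+1) * (-1:ℝ)^(j+1) = 1 := by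
      rw [← pow_add, show (j+1)+(j+1) = 2*(j+1) by omega, pow_mul, neg_one_sq, one_pow]
    have key : (-1:ℝ)^(j+1) * (α - x j) ≤ 1/((q j:ℝ) * (q (j+1):ℝ)) := by
      have e : (-1:ℝ)^(j+1) * (α - x j)
          = (-1:ℝ)^(j+1)*(α - x (j+1)) + (-1:ℝ)^(j+1) * (x (j+1) - x j) := by ring
      rw [e, hdj]
      have h3 : (-1:ℝ)^(j+1) * ((-1:ℝ)^(j+1) / ((q j:ℝ)*(q (j+1):ℝ)))
          = 1/((q j:ℝ)*(q (j+1):ℝ)) := by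
        rw [← mul_div_assoc, hss]
      linarith [h2, h3.le, h3.ge]
    calc |α - x j| = |(-1:ℝ)^(j+1) * (α - x j)| := by rw [abs_mul, habs, one_mul]
      _ = (-1:ℝ)^(j+1) * (α - x j) := abs_of_nonneg h1
      _ ≤ _ := key
  have hKpos : (0:ℝ) < K := by exact_mod_cast hK1
  have herr : ∀ j, 1 ≤ j → K ≤ a j → (q j:ℝ) * |(q j:ℝ) * α - (p j:ℝ)| ≤ 1/(K:ℝ) := by
    intro j hj hKj
    have hqj := hQpos j hj
    have hqj1 := hQpos (j+1) (by omega)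
    have hb := herrb j hj
    have e : (q j:ℝ) * α - (p j:ℝ) = (q j:ℝ) * (α - x j) := by
      simp only [hx]
      have hqne := hQne j hj
      field_simp
    rw [e, abs_mul, abs_of_pos hqj]
    have h2 : (q j:ℝ) * ((q j:ℝ) * |α - x j|) ≤ (q j:ℝ) * ((q j:ℝ) * (1/((q j:ℝ)*(q (j+1):ℝ)))) := by
      apply mul_le_mul_of_nonneg_left _ (hQ0 j)
      exact mul_le_mul_of_nonneg_left hb (hQ0 j)
    have h3 : (q j:ℝ) * ((q j:ℝ) * (1/((q j:ℝ)*(q (j+1):ℝ)))) = (q j:ℝ)/(q (j+1):ℝ) := by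
      field_simp
    have h4 : (q j:ℝ)/(q (j+1):ℝ) ≤ 1/(K:ℝ) := by
      rw [div_le_div_iff₀ hqj1 hKpos]
      have h5 : (a j:ℝ) * (q j:ℝ) ≤ (q (j+1):ℝ) := by exact_mod_cast hq_lb j hj
      have h6 : (K:ℝ) ≤ (a j:ℝ) := by exact_mod_cast hKj
      nlinarith [hQ0 j]
    linarith
  -- irrationality: errors are nonzero
  have herr_ne : ∀ j, 1 ≤ j → (q j:ℝ)*α - (p j:ℝ) ≠ 0 := by
    intro j hj h
    have hqne := hQne j hj
    have hα : α = (p j : ℝ)/(q j : ℝ) := by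
      rw [eq_div_iff hqne]
      linarith
    refine hirr ⟨(p j : ℚ)/(q j : ℚ), ?_⟩
    push_cast
    linarith [hα]
  -- constants
  have hM1 : 1 ≤ M := le_trans (ha 0) (hM 0)
  have hlogM : 0 ≤ Real.log M := lognn M
  have hK2 : 2 ≤ K := by
    by_contra h
    have hK1' : K = 1 := by omega
    rw [hK1'] at hKineq
    norm_num at hKineq
    linarith
  set c : ℝ := 802 + 151 * Real.log M / K - Real.log K with hc
  have hcneg : c < 0 := hKineq
  have hlog2pi : Real.log (2*π) ≤ 3 := by
    have h2 := Real.exp_one_gt_d9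
    have h3 := Real.pi_lt_d2
    have h4 : Real.exp 3 = Real.exp 1 * Real.exp 1 * Real.exp 1 := by
      rw [← Real.exp_add, ← Real.exp_add]; norm_num
    have h1 : (2:ℝ)*π ≤ Real.exp 3 := by nlinarith [Real.exp_pos 1]
    calc Real.log (2*π) ≤ Real.log (Real.exp 3) := Real.log_le_log (by positivity) h1
      _ = 3 := Real.log_exp 3
  -- the sequence of good indices
  choose f hf1 hf2 using hio
  set J : ℕ → ℕ := fun m => f^[m] 1 with hJ
  have hJsucc : ∀ m, J (m+1) = f (J m) := fun m => Function.iterate_succ_apply' f m 1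
  have hJlt : ∀ m, J m < J (m+1) := fun m => by rw [hJsucc]; exact hf1 (J m)
  have hJmono : StrictMono J := strictMono_nat_of_lt_succ hJlt
  have hJK : ∀ m, 1 ≤ m → K ≤ a (J m) := by
    intro m hm
    obtain ⟨m', rfl⟩ : ∃ m', m = m'+1 := ⟨m-1, by omega⟩
    rw [hJsucc]; exact hf2 (J m')
  have hJ1 : ∀ m, 1 ≤ J m := by
    intro m
    have h := hJmono.monotone (Nat.zero_le m)
    have : J 0 = 1 := rfl
    omega
  have hJ2 : ∀ m, 1 ≤ m → 2 ≤ J m := by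
    intro m hm
    have h := hJmono.monotone hm
    have h2 : J 0 < J 1 := hJlt 0
    have : J 0 = 1 := rfl
    omega
  -- main estimate
  have main : ∀ m : ℕ, 1 ≤ m → ∃ n : ℕ, m ≤ n ∧
      (∏ r ∈ Finset.Icc 1 n, |2 * Real.sin (Real.pi * (r:ℝ) * α)|) ≤ Real.exp (m * c) := by
    intro m hm
    set S : Finset ℕ := (Finset.Icc 1 m).image J with hS
    set b : ℕ → ℕ := fun j => if j ∈ S then 1 else 0 with hb
    have hmemS : ∀ j ∈ S, 2 ≤ j ∧ j ≤ J m ∧ K ≤ a j := by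
      intro j hj
      simp only [hS, Finset.mem_image, Finset.mem_Icc] at hj
      obtain ⟨i, ⟨hi1, hi2⟩, rfl⟩ := hj
      exact ⟨hJ2 i hi1, hJmono.monotone hi2, hJK i hi1⟩
    have hSsub : S ⊆ Finset.Icc 1 (J m) := by
      intro j hj
      have := hmemS j hj
      simp only [Finset.mem_Icc]
      omega
    have hcardS : S.card = m := by
      rw [hS, Finset.card_image_of_injective _ hJmono.injective, Nat.card_Icc]
      omega
    have hsum1 : ∑ j ∈ Finset.Icc 1 (J m), (b j : ℤ) * q j = ∑ j ∈ S, q j := by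
      have hite : ∀ j, (b j : ℤ) * q j = if j ∈ S then q j else 0 := by
        intro j; simp only [hb]; split_ifs <;> simp
      rw [Finset.sum_congr rfl (fun j _ => hite j), Finset.sum_ite_mem,
        Finset.inter_eq_right.mpr hSsub]
    have hsum2 : (m:ℤ) ≤ ∑ j ∈ S, q j := by
      calc (m:ℤ) = ∑ _j ∈ S, (1:ℤ) := by rw [Finset.sum_const, hcardS]; simp
        _ ≤ ∑ j ∈ S, q j := Finset.sum_le_sum (fun j hj => hq_pos j (by
            have := (hmemS j hj).1; omega))
    set n : ℕ := (∑ j ∈ S, q j).toNat with hn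
    have hnz : (n:ℤ) = ∑ j ∈ S, q j := Int.toNat_of_nonneg (by
      have : (0:ℤ) ≤ m := by exact_mod_cast Nat.zero_le m
      linarith)
    have hmn : m ≤ n := by
      have := hsum2
      rw [← hnz] at this
      exact_mod_cast this
    refine ⟨n, hmn, ?_⟩
    have hb1 : b 1 ≤ a 1 - 1 := by
      have hb1' : b 1 = 0 := by
        simp only [hb]
        rw [if_neg]
        intro h
        have := (hmemS 1 h).1
        omega
      omega
    have hble : ∀ j, b j ≤ 1 := by intro j; simp only [hb]; split_ifs <;> omega
    have hbm : ∀ j, 2 ≤ j → b j ≤ a j := fun j _ => le_trans (hble j) (ha j)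
    have hcarry : ∀ j, 2 ≤ j → b j = a j → b (j-1) = 0 := by
      intro j hj he
      exfalso
      by_cases h : j ∈ S
      · have hK := (hmemS j h).2.2
        have hbj : b j = 1 := by simp [hb, h]
        have := ha j
        omega
      · have hbj : b j = 0 := by simp [hb, h]
        have := ha j
        omega
    have hsumeq : (n:ℤ) = ∑ j ∈ Finset.Icc 1 (J m), (b j : ℤ) * q j := hnz.trans hsum1.symm
    have hlog := hLubinsky n (J m) b (by omega) (hJ1 m) hb1 hbm hcarry hsumeq
    -- bound the four right-hand terms
    have hfilter : (Finset.Icc 1 (J m)).filter (fun j => b j ≠ 0) = S := by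
      ext j
      simp only [Finset.mem_filter, hb]
      constructor
      · rintro ⟨hj, hne⟩
        by_contra h
        simp [h] at hne
      · intro hj
        exact ⟨hSsub hj, by simp [hj]⟩
    rw [hfilter, hcardS] at hlog
    have hs2 : ∑ j ∈ Finset.Icc 1 (J m), ((b j:ℝ)/(a j)) * Real.log (((Finset.Ico 1 j).sup a : ℕ))
        ≤ m * (Real.log M / K) := by
      calc ∑ j ∈ Finset.Icc 1 (J m), ((b j:ℝ)/(a j)) * Real.log (((Finset.Ico 1 j).sup a : ℕ))
          ≤ ∑ j ∈ Finset.Icc 1 (J m), (if j ∈ S then Real.log M / K else 0) := by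
            apply Finset.sum_le_sum
            intro j hj
            by_cases h : j ∈ S
            · rw [if_pos h]
              have hbj : b j = 1 := by simp [hb, h]
              rw [hbj]
              have hKa := (hmemS j h).2.2
              have hsup : ((Finset.Ico 1 j).sup a) ≤ M := Finset.sup_le (fun i _ => hM i)
              have hlog1 : Real.log (((Finset.Ico 1 j).sup a : ℕ)) ≤ Real.log M :=
                lognat_mono _ _ hsup
              have hlogsup0 : (0:ℝ) ≤ Real.log (((Finset.Ico 1 j).sup a : ℕ)) := lognn _
              have hKa' : (K:ℝ) ≤ (a j:ℝ) := by exact_mod_cast hKa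
              have hapos : (0:ℝ) < (a j:ℝ) := by exact_mod_cast ha j
              have hdiv : (1:ℝ)/(a j:ℝ) ≤ 1/(K:ℝ) := one_div_le_one_div_of_le hKpos hKa'
              push_cast
              calc (1:ℝ)/(a j:ℝ) * Real.log (((Finset.Ico 1 j).sup a : ℕ))
                  ≤ (1/(K:ℝ)) * Real.log M := mul_le_mul hdiv hlog1 hlogsup0 (by positivity)
                _ = Real.log M / K := by ring
            · rw [if_neg h]
              have hbj : b j = 0 := by simp [hb, h]
              rw [hbj]
              simp
      _ = m * (Real.log M / K) := by
            rw [Finset.sum_ite_mem, Finset.inter_eq_right.mpr hSsub, Finset.sum_const, hcardS,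
              nsmul_eq_mul]
    have hs3 : ∑ j ∈ Finset.Icc 1 (J m), max (Real.log (b j)) 0 = 0 := by
      apply Finset.sum_eq_zero
      intro j _
      rcases Nat.le_one_iff_eq_zero_or_eq_one.mp (hble j) with h | h <;> simp [h]
    have hs4 : ∑ j ∈ Finset.Icc 1 (J m),
        (b j : ℝ) * Real.log (2 * Real.pi * (b j) * (q j) * |(q j : ℝ) * α - (p j:ℝ)| / Real.exp 1)
        ≤ m * (Real.log (2*π) - 1 - Real.log K) := by
      calc ∑ j ∈ Finset.Icc 1 (J m),
          (b j : ℝ) * Real.log (2 * Real.pi * (b j) * (q j) * |(q j : ℝ) * α - (p j:ℝ)| / Real.exp 1)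
          ≤ ∑ j ∈ Finset.Icc 1 (J m),
            (if j ∈ S then (Real.log (2*π) - 1 - Real.log K) else 0) := by
            apply Finset.sum_le_sum
            intro j hj
            by_cases h : j ∈ S
            · rw [if_pos h]
              have hbj : b j = 1 := by simp [hb, h]
              rw [hbj]
              obtain ⟨hj2, hjm, hKa⟩ := hmemS j h
              have hj1 : 1 ≤ j := by omega
              have hqpos := hQpos j hj1
              have hene : (0:ℝ) < |(q j:ℝ)*α - (p j:ℝ)| := abs_pos.mpr (herr_ne j hj1)
              push_cast
              rw [one_mul, mul_one]
              have h5 := herr j hj1 hKa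
              have harg : 2*π*(q j:ℝ)*|(q j:ℝ)*α - (p j:ℝ)|/Real.exp 1
                  ≤ (2*π)/(Real.exp 1 * K) := by
                calc 2*π*(q j:ℝ)*|(q j:ℝ)*α - (p j:ℝ)|/Real.exp 1
                    = (2*π/Real.exp 1) * ((q j:ℝ)*|(q j:ℝ)*α - (p j:ℝ)|) := by ring
                  _ ≤ (2*π/Real.exp 1) * (1/(K:ℝ)) := by
                      apply mul_le_mul_of_nonneg_left h5 (by positivity)
                  _ = (2*π)/(Real.exp 1 * K) := by
                      rw [div_mul_div_comm, mul_one]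
              have hargpos : (0:ℝ) < 2*π*(q j:ℝ)*|(q j:ℝ)*α - (p j:ℝ)|/Real.exp 1 := by
                positivity
              calc Real.log (2*π*(q j:ℝ)*|(q j:ℝ)*α - (p j:ℝ)|/Real.exp 1)
                  ≤ Real.log ((2*π)/(Real.exp 1 * K)) := Real.log_le_log hargpos harg
                _ = Real.log (2*π) - 1 - Real.log K := by
                    rw [Real.log_div (by positivity) (by positivity),
                      Real.log_mul (Real.exp_ne_zero 1) (by positivity), Real.log_exp]
                    ring
            · rw [if_neg h]
              have hbj : b j = 0 := by simp [hb, h]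
              simp [hbj]
      _ = m * (Real.log (2*π) - 1 - Real.log K) := by
            rw [Finset.sum_ite_mem, Finset.inter_eq_right.mpr hSsub, Finset.sum_const, hcardS,
              nsmul_eq_mul]
    have hmnn : (0:ℝ) ≤ (m:ℝ) := by positivity
    have haux : (m:ℝ) * Real.log (2*π) ≤ (m:ℝ) * 3 := mul_le_mul_of_nonneg_left hlog2pi hmnn
    have hlogP : Real.log (∏ r ∈ Finset.Icc 1 n, |2 * Real.sin (Real.pi * (r:ℝ) * α)|)
        ≤ m * c := by
      rw [hc]
      have e : (m:ℝ) * (802 + 151 * Real.log M / K - Real.log K)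
          = (m:ℝ) * 802 + 151 * ((m:ℝ) * (Real.log M / K)) - (m:ℝ) * Real.log K := by ring
      rw [e]
      linarith [hlog, hs2, hs3, hs4, haux]
    have hP0 : (0:ℝ) ≤ ∏ r ∈ Finset.Icc 1 n, |2 * Real.sin (Real.pi * (r:ℝ) * α)| :=
      Finset.prod_nonneg (fun r _ => abs_nonneg _)
    rcases eq_or_lt_of_le hP0 with h | h
    · rw [← h]; exact (Real.exp_pos _).le
    · calc (∏ r ∈ Finset.Icc 1 n, |2 * Real.sin (Real.pi * (r:ℝ) * α)|)
          = Real.exp (Real.log (∏ r ∈ Finset.Icc 1 n, |2 * Real.sin (Real.pi * (r:ℝ) * α)|)) :=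
            (Real.exp_log h).symm
        _ ≤ Real.exp (m * c) := Real.exp_le_exp.mpr hlogP
  -- conclude
  set F : ℕ → ℝ := fun n => ∏ r ∈ Finset.Icc 1 n, |2 * Real.sin (Real.pi * (r:ℝ) * α)| with hF
  have hFnn : ∀ n, 0 ≤ F n := fun n => Finset.prod_nonneg (fun r _ => abs_nonneg _)
  have hfreq : ∀ ε : ℝ, 0 < ε → ∃ᶠ n in atTop, F n ≤ ε := by
    intro ε hε
    rw [Filter.frequently_atTop]
    intro N
    have h1 : Tendsto (fun m : ℕ => (m:ℝ)) atTop atTop := tendsto_natCast_atTop_atTop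
    have h2 : Tendsto (fun m : ℕ => (m:ℝ) * c) atTop atBot := h1.atTop_mul_const_of_neg hcneg
    have htendsto : Tendsto (fun m : ℕ => Real.exp ((m:ℝ) * c)) atTop (nhds 0) :=
      Real.tendsto_exp_atBot.comp h2
    have hev : ∀ᶠ m : ℕ in atTop, Real.exp ((m:ℝ)*c) < ε := htendsto.eventually (gt_mem_nhds hε)
    obtain ⟨m0, hm0⟩ := Filter.eventually_atTop.mp hev
    obtain ⟨n, hn1, hn2⟩ := main (max (max N 1) m0) (by omega)
    refine ⟨n, by omega, ?_⟩
    calc F n ≤ Real.exp ((max (max N 1) m0 : ℕ) * c) := hn2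
      _ ≤ ε := (hm0 _ (by omega)).le
  have hmem0 : (0:ℝ) ∈ {a : ℝ | ∀ᶠ n in atTop, a ≤ F n} :=
    Filter.Eventually.of_forall hFnn
  rw [Filter.liminf_eq]
  apply le_antisymm
  · apply csSup_le ⟨0, hmem0⟩
    intro y hy
    simp only [Set.mem_setOf_eq] at hy
    by_contra hy0
    push_neg at hy0
    obtain ⟨n, hn1, hn2⟩ := ((hfreq (y/2) (by linarith)).and_eventually hy).exists
    linarith
  · apply le_csSup
    · refine ⟨1, ?_⟩
      intro y hy
      simp only [Set.mem_setOf_eq] at hy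
      obtain ⟨n, hn1, hn2⟩ := ((hfreq 1 one_pos).and_eventually hy).exists
      linarith
    · exact hmem0
end

section
/- Let α be irrational with unbounded continued fraction coefficients, and suppose Lubinsky's inequality (as in Proposition 5.1) holds. Choose a strictly increasing subsequence (a_{n_j}) with a_{n_j} > a_k for all k < n_j. Then for N_j = q_{n_j}, one has log P_{N_j}(α) ≤ C − log a_{n_j} for an absolute constant C, and hence P_{N_j}(α) → 0 as j → ∞; in particular liminf_{n→∞} P_n(α) = 0. -/
open Real Finset Filter

section aux
variable (α : ℝ) (a : ℕ → ℕ) (q : ℕ → ℕ) (p : ℕ → ℤ)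

lemma aux_q_pos (ha : ∀ i, 1 ≤ a i) (hq1 : q 1 = 1)
    (hqrec : ∀ n, 1 ≤ n → q (n + 1) = a n * q n + q (n - 1)) :
    ∀ n, 1 ≤ n → 1 ≤ q n := by
  intro n hn
  induction n with
  | zero => omega
  | succ m ih =>
    rcases Nat.eq_or_lt_of_le hn with h | h
    · simp [← h, hq1]  -- m+1 = 1
    · have hm : 1 ≤ m := by omega
      rw [hqrec m hm]
      have := ih hm
      have := ha m
      nlinarith

lemma aux_q_mono (ha : ∀ i, 1 ≤ a i) (hq1 : q 1 = 1)
    (hqrec : ∀ n, 1 ≤ n → q (n + 1) = a n * q n + q (n - 1)) :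
    ∀ n, 1 ≤ n → q n ≤ q (n + 1) := by
  intro n hn
  rw [hqrec n hn]
  have := ha n
  nlinarith [aux_q_pos a q ha hq1 hqrec n hn]

lemma aux_det (ha : ∀ i, 1 ≤ a i) (hq0 : q 0 = 0) (hq1 : q 1 = 1)
    (hqrec : ∀ n, 1 ≤ n → q (n + 1) = a n * q n + q (n - 1))
    (hp0 : p 0 = 1) (hp1 : p 1 = 0)
    (hprec : ∀ n, 1 ≤ n → p (n + 1) = a n * p n + p (n - 1)) :
    ∀ n, 1 ≤ n → p (n + 1) * (q n : ℤ) - p n * (q (n + 1) : ℤ) = (-1) ^ (n + 1) := by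
  intro n hn
  induction n with
  | zero => omega
  | succ m ih =>
    rcases Nat.eq_or_lt_of_le hn with h | h
    · have : m = 0 := by omega
      subst this
      rw [hprec 1 le_rfl, hqrec 1 le_rfl]
      simp only [Nat.sub_self, hp0, hp1, hq0, hq1]
      push_cast
      ring
    · have hm : 1 ≤ m := by omega
      have ihm := ih hm
      rw [hprec (m+1) (by omega), hqrec (m+1) (by omega)]
      push_cast
      have e : (-1:ℤ) ^ (m + 1 + 1) = -(-1) ^ (m + 1) := by ring
      rw [e]
      linear_combination -ihm

lemma aux_diff (ha : ∀ i, 1 ≤ a i) (hq0 : q 0 = 0) (hq1 : q 1 = 1)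
    (hqrec : ∀ n, 1 ≤ n → q (n + 1) = a n * q n + q (n - 1))
    (hp0 : p 0 = 1) (hp1 : p 1 = 0)
    (hprec : ∀ n, 1 ≤ n → p (n + 1) = a n * p n + p (n - 1)) :
    ∀ n, 1 ≤ n → (p (n+1) : ℝ) / q (n+1) - (p n : ℝ) / q n
      = (-1) ^ (n+1) / ((q n : ℝ) * q (n+1)) := by
  intro n hn
  have h1 : (1:ℝ) ≤ q n := by exact_mod_cast aux_q_pos a q ha hq1 hqrec n hn
  have h2 : (1:ℝ) ≤ q (n+1) := by exact_mod_cast aux_q_pos a q ha hq1 hqrec (n+1) (by omega)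
  have hd := aux_det a q p ha hq0 hq1 hqrec hp0 hp1 hprec n hn
  have hd' : (p (n+1) : ℝ) * q n - (p n : ℝ) * q (n+1) = (-1) ^ (n+1) := by
    exact_mod_cast hd
  field_simp
  linear_combination hd'

lemma aux_sand (ha : ∀ i, 1 ≤ a i) (hq0 : q 0 = 0) (hq1 : q 1 = 1)
    (hqrec : ∀ n, 1 ≤ n → q (n + 1) = a n * q n + q (n - 1))
    (hp0 : p 0 = 1) (hp1 : p 1 = 0)
    (hprec : ∀ n, 1 ≤ n → p (n + 1) = a n * p n + p (n - 1)) :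
    ∀ d n, 1 ≤ n →
      0 ≤ (-1) ^ (n+1) * ((p (n+d) : ℝ) / q (n+d) - (p n : ℝ) / q n) ∧
      (-1) ^ (n+1) * ((p (n+d) : ℝ) / q (n+d) - (p n : ℝ) / q n)
        ≤ 1 / ((q n : ℝ) * q (n+1)) := by
  intro d
  induction d with
  | zero =>
    intro n hn
    have h1 : (1:ℝ) ≤ q n := by exact_mod_cast aux_q_pos a q ha hq1 hqrec n hn
    have h2 : (1:ℝ) ≤ q (n+1) := by exact_mod_cast aux_q_pos a q ha hq1 hqrec (n+1) (by omega)
    constructor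
    · simp
    · simp only [Nat.add_zero, sub_self, mul_zero]
      positivity
  | succ d ih =>
    intro n hn
    have h1 : (1:ℝ) ≤ q n := by exact_mod_cast aux_q_pos a q ha hq1 hqrec n hn
    have h2 : (1:ℝ) ≤ q (n+1) := by exact_mod_cast aux_q_pos a q ha hq1 hqrec (n+1) (by omega)
    have h3 : (1:ℝ) ≤ q (n+2) := by exact_mod_cast aux_q_pos a q ha hq1 hqrec (n+2) (by omega)
    have hm1 : (q n : ℝ) ≤ q (n+1) := by exact_mod_cast aux_q_mono a q ha hq1 hqrec n hn
    have hm2 : (q (n+1) : ℝ) ≤ q (n+2) := by exact_mod_cast aux_q_mono a q ha hq1 hqrec (n+1) (by omega)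
    have hdiff := aux_diff a q p ha hq0 hq1 hqrec hp0 hp1 hprec n hn
    have ihn := ih (n+1) (by omega)
    have hsplit : ((p (n+(d+1)) : ℝ) / q (n+(d+1)) - (p n : ℝ) / q n)
        = ((p ((n+1)+d) : ℝ) / q ((n+1)+d) - (p (n+1) : ℝ) / q (n+1))
          + ((p (n+1) : ℝ) / q (n+1) - (p n : ℝ) / q n) := by
      have : n + (d+1) = (n+1) + d := by omega
      rw [this]; ring
    rw [hsplit, mul_add, hdiff]
    have hsign : (-1:ℝ) ^ (n+1) * ((-1) ^ (n+1) / ((q n : ℝ) * q (n+1)))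
        = 1 / ((q n : ℝ) * q (n+1)) := by
      rw [← mul_div_assoc, ← pow_add]
      have he : Even ((n+1)+(n+1)) := ⟨n+1, rfl⟩
      rw [he.neg_one_pow]
    rw [hsign]
    have hflip : (-1:ℝ) ^ (n+1) * ((p ((n+1)+d) : ℝ) / q ((n+1)+d) - (p (n+1) : ℝ) / q (n+1))
        = -((-1) ^ ((n+1)+1) * ((p ((n+1)+d) : ℝ) / q ((n+1)+d) - (p (n+1) : ℝ) / q (n+1))) := by
      ring
    rw [hflip]
    obtain ⟨ih1, ih2⟩ := ihn
    have hle : 1 / ((q (n+1) : ℝ) * q (n+2)) ≤ 1 / ((q n : ℝ) * q (n+1)) := by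
      apply one_div_le_one_div_of_le
      · nlinarith
      · nlinarith
    constructor
    · linarith
    · linarith

lemma aux_conv (hirr : Irrational α) (ha : ∀ i, 1 ≤ a i) (hq0 : q 0 = 0) (hq1 : q 1 = 1)
    (hqrec : ∀ n, 1 ≤ n → q (n + 1) = a n * q n + q (n - 1))
    (hp0 : p 0 = 1) (hp1 : p 1 = 0)
    (hprec : ∀ n, 1 ≤ n → p (n + 1) = a n * p n + p (n - 1))
    (hlim : Filter.Tendsto (fun n => (p n : ℝ) / q n) Filter.atTop (nhds α)) :
    ∀ n, 1 ≤ n → |(q n : ℝ) * α - p n| ≤ 1 / q (n+1) := by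
  intro n hn
  have h1 : (1:ℝ) ≤ q n := by exact_mod_cast aux_q_pos a q ha hq1 hqrec n hn
  have h2 : (1:ℝ) ≤ q (n+1) := by exact_mod_cast aux_q_pos a q ha hq1 hqrec (n+1) (by omega)
  have hcomp : Filter.Tendsto (fun d : ℕ => (p (n+d) : ℝ) / q (n+d)) Filter.atTop (nhds α) := by
    have h := hlim.comp (tendsto_add_atTop_nat n)
    exact h.congr (fun d => by simp [Nat.add_comm])
  have htend : Filter.Tendsto
      (fun d => (-1:ℝ) ^ (n+1) * ((p (n+d) : ℝ) / q (n+d) - (p n : ℝ) / q n))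
      Filter.atTop (nhds ((-1) ^ (n+1) * (α - (p n : ℝ) / q n))) :=
    ((hcomp.sub_const _).const_mul _)
  set L := (-1:ℝ) ^ (n+1) * (α - (p n : ℝ) / q n) with hL
  have hs := aux_sand a q p ha hq0 hq1 hqrec hp0 hp1 hprec
  have hL0 : 0 ≤ L := by
    refine ge_of_tendsto htend (Filter.Eventually.of_forall fun d => ?_)
    exact (hs d n hn).1
  have hL1 : L ≤ 1 / ((q n : ℝ) * q (n+1)) := by
    refine le_of_tendsto htend (Filter.Eventually.of_forall fun d => ?_)
    exact (hs d n hn).2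
  have habs : |α - (p n : ℝ) / q n| ≤ 1 / ((q n : ℝ) * q (n+1)) := by
    have : |α - (p n : ℝ) / q n| = |L| := by
      rw [hL, abs_mul, abs_pow, abs_neg, abs_one, one_pow, one_mul]
    rw [this, abs_of_nonneg hL0]
    exact hL1
  have hq : (0:ℝ) < q n := by linarith
  calc |(q n : ℝ) * α - p n| = (q n : ℝ) * |α - (p n : ℝ) / q n| := by
        rw [← abs_of_pos hq, ← abs_mul]
        congr 1
        field_simp
        rw [abs_of_pos hq]; ring
      _ ≤ (q n : ℝ) * (1 / ((q n : ℝ) * q (n+1))) :=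
        mul_le_mul_of_nonneg_left habs (le_of_lt hq)
      _ = 1 / q (n+1) := by field_simp
end aux

theorem stmt_19 (α : ℝ) (hirr : Irrational α) (h0 : 0 < α) (h1 : α < 1)
    (a : ℕ → ℕ) (ha : ∀ i, 1 ≤ a i)
    (hunbdd : ∀ B : ℕ, ∃ j, B < a j)
    (q : ℕ → ℕ) (p : ℕ → ℤ)
    (hq0 : q 0 = 0) (hq1 : q 1 = 1)
    (hqrec : ∀ n, 1 ≤ n → q (n + 1) = a n * q n + q (n - 1))
    (hp0 : p 0 = 1) (hp1 : p 1 = 0)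
    (hprec : ∀ n, 1 ≤ n → p (n + 1) = a n * p n + p (n - 1))
    (hlim : Filter.Tendsto (fun n => (p n : ℝ) / q n) Filter.atTop (nhds α))
    (hLubinsky : ∀ (n z : ℕ) (b : ℕ → ℕ), 1 ≤ n → 1 ≤ z →
      b 1 ≤ a 1 - 1 →
      (∀ j, 2 ≤ j → b j ≤ a j) →
      (∀ j, 2 ≤ j → b j = a j → b (j - 1) = 0) →
      n = ∑ j ∈ Finset.Icc 1 z, b j * q j →
      Real.log (∏ r ∈ Finset.Icc 1 n, |2 * Real.sin (Real.pi * r * α)|) ≤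
        800 * ((Finset.Icc 1 z).filter (fun j => b j ≠ 0)).card
        + 151 * ∑ j ∈ Finset.Icc 1 z,
            ((b j : ℝ) / a j) * Real.log (((Finset.Ico 1 j).sup a : ℕ))
        + (3 / 2) * ∑ j ∈ Finset.Icc 1 z, max (Real.log (b j)) 0
        + ∑ j ∈ Finset.Icc 1 z,
            (b j : ℝ) * Real.log (2 * Real.pi * b j * q j * |(q j : ℝ) * α - p j| / Real.exp 1))
    (nseq : ℕ → ℕ) (hnseq : StrictMono nseq) (hnseq1 : ∀ j, 2 ≤ nseq j)
    (hdom : ∀ j, ∀ k < nseq j, a k < a (nseq j)) :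
    (∃ C : ℝ, ∀ j : ℕ,
      Real.log (∏ r ∈ Finset.Icc 1 (q (nseq j)), |2 * Real.sin (Real.pi * r * α)|) ≤
        C - Real.log (a (nseq j))) ∧
    Filter.Tendsto
      (fun j : ℕ => ∏ r ∈ Finset.Icc 1 (q (nseq j)), |2 * Real.sin (Real.pi * r * α)|)
      Filter.atTop (nhds 0) ∧
    Filter.atTop.liminf
      (fun n : ℕ => ∏ r ∈ Finset.Icc 1 n, |2 * Real.sin (Real.pi * r * α)|) = 0 := by
  have hqpos := aux_q_pos a q ha hq1 hqrec
  have hconv := aux_conv α a q p hirr ha hq0 hq1 hqrec hp0 hp1 hprec hlim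
  -- positivity of the products
  have hPpos : ∀ n : ℕ, 0 < ∏ r ∈ Finset.Icc 1 n, |2 * Real.sin (Real.pi * r * α)| := by
    intro n
    apply Finset.prod_pos
    intro r hr
    have hr1 : 1 ≤ r := (Finset.mem_Icc.mp hr).1
    rw [abs_pos]
    intro hzero
    have hsin : Real.sin (Real.pi * r * α) = 0 := by
      have h2 : (2:ℝ) ≠ 0 := two_ne_zero
      rcases mul_eq_zero.mp hzero with h | h
      · exact absurd h h2
      · exact h
    rw [Real.sin_eq_zero_iff] at hsin
    obtain ⟨m, hm⟩ := hsin
    have hrpos : (0:ℝ) < r := by exact_mod_cast hr1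
    have hπ : Real.pi ≠ 0 := Real.pi_ne_zero
    have h2 : (m:ℝ) = r * α := mul_right_cancel₀ hπ (by rw [hm]; ring)
    have hα : α = (m : ℝ) / r := by
      rw [eq_div_iff (ne_of_gt hrpos), h2]; ring
    exact hirr ⟨(m : ℚ) / (r : ℚ), by rw [hα]; push_cast; ring⟩
  -- irrationality of the errors
  have herrpos : ∀ n, 1 ≤ n → 0 < |(q n : ℝ) * α - p n| := by
    intro n hn
    rw [abs_pos, sub_ne_zero]
    intro h
    have hq : (0:ℝ) < q n := by exact_mod_cast hqpos n hn
    have : α = (p n : ℝ) / q n := by field_simp at h ⊢; linarith [h]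
    exact hirr ⟨(p n : ℚ) / (q n : ℚ), by rw [this]; push_cast; ring⟩
  -- the key bound
  have key : ∀ j : ℕ,
      Real.log (∏ r ∈ Finset.Icc 1 (q (nseq j)), |2 * Real.sin (Real.pi * r * α)|) ≤
        (950 + Real.log (2 * Real.pi)) - Real.log (a (nseq j)) := by
    intro j
    set N := nseq j with hNdef
    have hN2 : 2 ≤ N := hnseq1 j
    set b : ℕ → ℕ := fun k => if k = N then 1 else 0 with hb
    have hqN : 1 ≤ q N := hqpos N (by omega)
    have hsum : q N = ∑ k ∈ Finset.Icc 1 N, b k * q k := by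
      rw [Finset.sum_eq_single N]
      · simp [hb]
      · intro k _ hkN; simp [hb, hkN]
      · intro h; exact absurd (Finset.mem_Icc.mpr ⟨by omega, le_rfl⟩) h
    have hlub := hLubinsky (q N) N b hqN (by omega)
      (by simp only [hb]; rw [if_neg (by omega : ¬ (1 = N))]; exact Nat.zero_le _)
      (by
        intro k hk
        simp only [hb]
        by_cases hkN : k = N
        · rw [if_pos hkN, hkN]; exact ha N
        · rw [if_neg hkN]; exact Nat.zero_le _)
      (by
        intro k hk hbk
        simp only [hb] at hbk ⊢
        by_cases hkN : k = N
        · rw [if_pos hkN] at hbk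
          rw [if_neg (by omega : ¬ (k - 1 = N))]
        · rw [if_neg hkN] at hbk
          exact absurd hbk.symm (by have := ha k; omega))
      hsum
    -- evaluate the four terms
    have hfilter : ((Finset.Icc 1 N).filter (fun k => b k ≠ 0)) = {N} := by
      ext k
      simp only [Finset.mem_filter, Finset.mem_Icc, Finset.mem_singleton, hb]
      constructor
      · rintro ⟨-, hne⟩
        by_contra hkN
        rw [if_neg hkN] at hne
        exact hne rfl
      · rintro rfl
        exact ⟨⟨by omega, le_rfl⟩, by simp⟩
    have haN1 : (1:ℝ) ≤ a N := by exact_mod_cast ha N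
    have haN0 : (0:ℝ) < a N := by linarith
    have hsum2 : ∑ k ∈ Finset.Icc 1 N,
        ((b k : ℝ) / a k) * Real.log (((Finset.Ico 1 k).sup a : ℕ)) ≤ 1 := by
      rw [Finset.sum_eq_single N]
      · have hbN : b N = 1 := by simp [hb]
        rw [hbN]
        have hsup_le : ((Finset.Ico 1 N).sup a) ≤ a N :=
          Finset.sup_le (fun k hk => le_of_lt (hdom j k (Finset.mem_Ico.mp hk).2))
        have hsupR : (((Finset.Ico 1 N).sup a : ℕ) : ℝ) ≤ (a N : ℝ) := by exact_mod_cast hsup_le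
        have hlog : Real.log (((Finset.Ico 1 N).sup a : ℕ)) ≤ (a N : ℝ) := by
          have hsup1 : 1 ≤ (Finset.Ico 1 N).sup a :=
            le_trans (ha 1) (Finset.le_sup (Finset.mem_Ico.mpr ⟨le_rfl, by omega⟩))
          have hsupPos : (0:ℝ) < (((Finset.Ico 1 N).sup a : ℕ) : ℝ) := by
            exact_mod_cast Nat.lt_of_lt_of_le Nat.zero_lt_one hsup1
          calc Real.log (((Finset.Ico 1 N).sup a : ℕ)) ≤ Real.log (a N) :=
                Real.log_le_log hsupPos hsupR
            _ ≤ (a N : ℝ) - 1 := Real.log_le_sub_one_of_pos haN0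
            _ ≤ (a N : ℝ) := by linarith
        have h1a : ((1:ℕ) : ℝ) / a N = 1 / (a N : ℝ) := by norm_num
        rw [h1a]
        calc (1 / (a N : ℝ)) * Real.log (((Finset.Ico 1 N).sup a : ℕ))
            ≤ (1 / (a N : ℝ)) * (a N : ℝ) := by
              apply mul_le_mul_of_nonneg_left hlog
              positivity
          _ = 1 := by field_simp
      · intro k _ hkN
        simp [hb, hkN]
      · intro h; exact absurd (Finset.mem_Icc.mpr ⟨by omega, le_rfl⟩) h
    have hsum3 : ∑ k ∈ Finset.Icc 1 N, max (Real.log (b k)) 0 = 0 := by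
      apply Finset.sum_eq_zero
      intro k _
      by_cases hkN : k = N
      · simp [hb, hkN]
      · simp [hb, hkN]
    have hsum4 : ∑ k ∈ Finset.Icc 1 N,
        (b k : ℝ) * Real.log (2 * Real.pi * b k * q k * |(q k : ℝ) * α - p k| / Real.exp 1)
        ≤ Real.log (2 * Real.pi) - 1 - Real.log (a N) := by
      rw [Finset.sum_eq_single N]
      · have hbN : b N = 1 := by simp [hb]
        rw [hbN]
        have hqNR : (1:ℝ) ≤ q N := by exact_mod_cast hqN
        have herr := herrpos N (by omega)
        have hbound : (q N : ℝ) * |(q N : ℝ) * α - p N| ≤ 1 / (a N : ℝ) := by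
          have hc := hconv N (by omega)
          have hqq : (a N : ℝ) * q N ≤ q (N + 1) := by
            have := hqrec N (by omega)
            have : a N * q N ≤ q (N + 1) := by omega
            exact_mod_cast this
          have hpos : (0:ℝ) < (a N : ℝ) * q N := by positivity
          have h1 : (1:ℝ) / q (N+1) ≤ 1 / ((a N : ℝ) * q N) :=
            one_div_le_one_div_of_le hpos hqq
          have h2 : |(q N : ℝ) * α - p N| ≤ 1 / ((a N : ℝ) * q N) := le_trans hc h1
          calc (q N : ℝ) * |(q N : ℝ) * α - p N| ≤ (q N : ℝ) * (1 / ((a N : ℝ) * q N)) :=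
                mul_le_mul_of_nonneg_left h2 (by linarith)
            _ = 1 / (a N : ℝ) := by field_simp
        have hargpos : 0 < 2 * Real.pi * ((1:ℕ):ℝ) * q N * |(q N : ℝ) * α - p N| / Real.exp 1 := by
          have := Real.pi_pos
          have := Real.exp_pos 1
          positivity
        have harg : 2 * Real.pi * ((1:ℕ):ℝ) * q N * |(q N : ℝ) * α - p N| / Real.exp 1
            ≤ 2 * Real.pi / (Real.exp 1 * a N) := by
          have hrw : 2 * Real.pi * ((1:ℕ):ℝ) * q N * |(q N : ℝ) * α - p N| / Real.exp 1
              = (2 * Real.pi / Real.exp 1) * ((q N : ℝ) * |(q N : ℝ) * α - p N|) := by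
            push_cast; ring
          rw [hrw]
          have hc : (0:ℝ) ≤ 2 * Real.pi / Real.exp 1 := by
            have := Real.pi_pos; have := Real.exp_pos 1; positivity
          calc (2 * Real.pi / Real.exp 1) * ((q N : ℝ) * |(q N : ℝ) * α - p N|)
              ≤ (2 * Real.pi / Real.exp 1) * (1 / (a N : ℝ)) :=
                mul_le_mul_of_nonneg_left hbound hc
            _ = 2 * Real.pi / (Real.exp 1 * a N) := by
                field_simp
        have hlog1 : Real.log (2 * Real.pi * ((1:ℕ):ℝ) * q N * |(q N : ℝ) * α - p N| / Real.exp 1)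
            ≤ Real.log (2 * Real.pi / (Real.exp 1 * a N)) :=
          Real.log_le_log hargpos harg
        have hlog2 : Real.log (2 * Real.pi / (Real.exp 1 * a N))
            = Real.log (2 * Real.pi) - 1 - Real.log (a N) := by
          rw [Real.log_div (by positivity) (by positivity), Real.log_mul (Real.exp_ne_zero 1)
            (by positivity), Real.log_exp]
          ring
        rw [hlog2] at hlog1
        simp only [Nat.cast_one, one_mul] at hlog1 ⊢
        exact hlog1
      · intro k _ hkN
        simp [hb, hkN]
      · intro h; exact absurd (Finset.mem_Icc.mpr ⟨by omega, le_rfl⟩) h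
    rw [hfilter] at hlub
    simp only [Finset.card_singleton, Nat.cast_one, mul_one] at hlub
    calc Real.log (∏ r ∈ Finset.Icc 1 (q N), |2 * Real.sin (Real.pi * r * α)|)
        ≤ 800 + 151 * ∑ k ∈ Finset.Icc 1 N,
            ((b k : ℝ) / a k) * Real.log (((Finset.Ico 1 k).sup a : ℕ))
          + (3 / 2) * ∑ k ∈ Finset.Icc 1 N, max (Real.log (b k)) 0
          + ∑ k ∈ Finset.Icc 1 N,
            (b k : ℝ) * Real.log (2 * Real.pi * b k * q k * |(q k : ℝ) * α - p k| / Real.exp 1) :=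
          hlub
      _ ≤ 800 + 151 * 1 + (3/2) * 0 + (Real.log (2 * Real.pi) - 1 - Real.log (a N)) := by
          have h151 : (151:ℝ) * ∑ k ∈ Finset.Icc 1 N,
              ((b k : ℝ) / a k) * Real.log (((Finset.Ico 1 k).sup a : ℕ)) ≤ 151 * 1 := by
            apply mul_le_mul_of_nonneg_left hsum2; norm_num
          rw [hsum3]
          linarith [hsum4, h151]
      _ = (950 + Real.log (2 * Real.pi)) - Real.log (a N) := by ring
  -- a (nseq j) → ∞
  have haT : Filter.Tendsto (fun j => a (nseq j)) Filter.atTop Filter.atTop := by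
    rw [tendsto_atTop_atTop]
    intro B
    obtain ⟨k, hk⟩ := hunbdd B
    refine ⟨k + 1, fun j hj => ?_⟩
    have hkj : k < nseq j := lt_of_lt_of_le (by omega) (hnseq.le_apply)
    exact le_of_lt (lt_trans hk (hdom j k hkj))
  have hlogT : Filter.Tendsto (fun j => Real.log (a (nseq j))) Filter.atTop Filter.atTop :=
    Real.tendsto_log_atTop.comp (tendsto_natCast_atTop_atTop.comp haT)
  have hCT : Filter.Tendsto (fun j => (950 + Real.log (2 * Real.pi)) - Real.log (a (nseq j)))
      Filter.atTop Filter.atBot :=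
    tendsto_atBot_add_const_left _ _ (tendsto_neg_atBot_iff.mpr hlogT)
  have hlogP : Filter.Tendsto
      (fun j => Real.log (∏ r ∈ Finset.Icc 1 (q (nseq j)), |2 * Real.sin (Real.pi * r * α)|))
      Filter.atTop Filter.atBot :=
    tendsto_atBot_mono key hCT
  have htend0 : Filter.Tendsto
      (fun j : ℕ => ∏ r ∈ Finset.Icc 1 (q (nseq j)), |2 * Real.sin (Real.pi * r * α)|)
      Filter.atTop (nhds 0) := by
    have := Real.tendsto_exp_atBot.comp hlogP
    exact this.congr (fun j => Real.exp_log (hPpos _))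
  refine ⟨⟨950 + Real.log (2 * Real.pi), key⟩, htend0, ?_⟩
  -- liminf
  set f : ℕ → ℝ := fun n => ∏ r ∈ Finset.Icc 1 n, |2 * Real.sin (Real.pi * r * α)| with hf
  -- q (nseq j) → ∞
  have hqlb : ∀ n, 2 ≤ n → n - 1 ≤ q n := by
    intro n hn
    induction n with
    | zero => omega
    | succ m ih =>
      rcases Nat.eq_or_lt_of_le hn with h | h
      · have : m = 1 := by omega
        subst this
        have := hqpos (1 + 1) (by omega)
        omega
      · have hm : 2 ≤ m := by omega
        have h1 := ih hm
        have h2 := hqrec m (by omega)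
        have h3 := hqpos (m - 1) (by omega)
        have h4 := hqpos m (by omega)
        have h5 := ha m
        have : q m + q (m-1) ≤ q (m+1) := by
          rw [h2]
          have : q m ≤ a m * q m := Nat.le_mul_of_pos_left _ (by omega)
          omega
        omega
  have hqT : Filter.Tendsto (fun j => q (nseq j)) Filter.atTop Filter.atTop := by
    rw [tendsto_atTop_atTop]
    intro B
    refine ⟨B + 2, fun j hj => ?_⟩
    have h1 : B + 2 ≤ nseq j := le_trans hj (hnseq.le_apply)
    have h2 := hqlb (nseq j) (by omega)
    omega
  have hfreq : ∀ ε : ℝ, 0 < ε → ∃ᶠ n in Filter.atTop, f n ≤ ε := by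
    intro ε hε
    have hev : ∀ᶠ j in Filter.atTop, f (q (nseq j)) ≤ ε :=
      (htend0.eventually_lt_const hε).mono (fun j hj => le_of_lt hj)
    exact hqT.frequently hev.frequently
  have hbdd : Filter.IsBoundedUnder (· ≥ ·) Filter.atTop f :=
    Filter.isBoundedUnder_of ⟨0, fun n => le_of_lt (hPpos n)⟩
  have hcob : Filter.IsCoboundedUnder (· ≥ ·) Filter.atTop f := by
    refine ⟨1, fun c hc => ?_⟩
    rw [Filter.eventually_map] at hc
    obtain ⟨n, hn1, hn2⟩ := (hc.and_frequently (hfreq 1 one_pos)).exists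
    exact le_trans hn1 hn2
  have hle : Filter.atTop.liminf f ≤ 0 := by
    apply le_of_forall_gt_imp_ge_of_dense
    intro ε hε
    exact liminf_le_of_frequently_le (hfreq ε hε) hbdd
  have hge : 0 ≤ Filter.atTop.liminf f :=
    le_liminf_of_le hcob (Filter.Eventually.of_forall (fun n => le_of_lt (hPpos n)))
  exact le_antisymm hle hge
end
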